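/- arXiv:1205.1752 — 2 statements merged into one kernel-verified Lean document; each statement's English description precedes it below -/
import Mathlib

section
/- Let H be a graph on vertices {1,…,p}, and for each i let G_i be a graph with a vertex subset S_i such that either S_i or V(G_i)\S_i is (k_i,τ_i)-regular in G_i. Let G be the (H,S)-generalized join: the disjoint union of the G_i's with every vertex of S_i joined to every vertex of S_j whenever ij ∈ E(H). If λ is a non-main eigenvalue of some G_i with λ ≠ k_i − τ_i, then λ is an eigenvalue of G. -/
open scoped Classical

/-- Adjacency matrix of a simple graph over the reals. -/
noncomputable def adjMat {W : Type*} [Fintype W] (G : SimpleGraph W) : Matrix W W ℝ :=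
  fun x y => if G.Adj x y then 1 else 0

/-- `μ` is an eigenvalue of the adjacency matrix of `G`. -/
def IsEigen {W : Type*} [Fintype W] (G : SimpleGraph W) (μ : ℝ) : Prop :=
  ∃ v : W → ℝ, v ≠ 0 ∧ (adjMat G).mulVec v = μ • v

/-- Largest adjacency eigenvalue. -/
noncomputable def lamMax {W : Type*} [Fintype W] (G : SimpleGraph W) : ℝ :=
  sSup {μ | IsEigen G μ}

/-- Smallest adjacency eigenvalue. -/
noncomputable def lamMin {W : Type*} [Fintype W] (G : SimpleGraph W) : ℝ :=
  sInf {μ | IsEigen G μ}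

/-- Spread of a graph: largest minus smallest adjacency eigenvalue. -/
noncomputable def spread {W : Type*} [Fintype W] (G : SimpleGraph W) : ℝ :=
  lamMax G - lamMin G

/-- An eigenvalue is non-main if its eigenspace is orthogonal to the all-ones vector. -/
def IsNonMain {W : Type*} [Fintype W] (G : SimpleGraph W) (μ : ℝ) : Prop :=
  ∀ v : W → ℝ, (adjMat G).mulVec v = μ • v → ∑ i, v i = 0

/-- `S` is a `(k,τ)`-regular set in `G`. -/
def IsKTauRegularSet {W : Type*} [Fintype W] (G : SimpleGraph W) (S : Set W) (k τ : ℕ) : Prop :=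
  (∀ i ∈ S, {j | j ∈ S ∧ G.Adj i j}.ncard = k) ∧
  (∀ i ∉ S, {j | j ∈ S ∧ G.Adj i j}.ncard = τ)

/-- Characteristic vector of a vertex subset. -/
noncomputable def charVec {W : Type*} (S : Set W) : W → ℝ :=
  fun i => if i ∈ S then 1 else 0

/-- `G` is `d`-regular (each row of the adjacency matrix sums to `d`). -/
def IsReg {W : Type*} [Fintype W] (G : SimpleGraph W) (d : ℕ) : Prop :=
  ∀ i, ∑ j, adjMat G i j = (d : ℝ)

/-- Adjacency spectrum of `G` as a multiset (roots of the characteristic polynomial). -/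
noncomputable def specMul {W : Type*} [Fintype W] (G : SimpleGraph W) : Multiset ℝ :=
  (adjMat G).charpoly.roots

/-- The `(H, 𝒮)`-generalized join of the family `G` constrained by vertex subsets `S`. -/
def genJoin {p : ℕ} {V : Fin p → Type*} (H : SimpleGraph (Fin p))
    (G : ∀ i, SimpleGraph (V i)) (S : ∀ i, Set (V i)) : SimpleGraph (Σ i, V i) where
  Adj x y :=
    (∃ (i : Fin p) (a b : V i), x = ⟨i, a⟩ ∧ y = ⟨i, b⟩ ∧ (G i).Adj a b) ∨
    (x.1 ≠ y.1 ∧ H.Adj x.1 y.1 ∧ x.2 ∈ S x.1 ∧ y.2 ∈ S y.1)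
  symm := by
    refine ⟨?_⟩
    rintro x y (⟨i, a, b, rfl, rfl, hab⟩ | ⟨hne, hH, hx, hy⟩)
    · exact Or.inl ⟨i, b, a, rfl, rfl, hab.symm⟩
    · exact Or.inr ⟨hne.symm, hH.symm, hy, hx⟩
  loopless := by
    refine ⟨?_⟩
    rintro x (⟨i, a, b, rfl, h2, hab⟩ | ⟨hne, _⟩)
    · obtain ⟨rfl⟩ := heq_iff_eq.mp (Sigma.mk.inj_iff.mp h2).2
      exact (G i).irrefl hab
    · exact hne rfl

/-- The join of two vertex-disjoint graphs. -/
def joinG {A B : Type*} (G1 : SimpleGraph A) (G2 : SimpleGraph B) : SimpleGraph (A ⊕ B) where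
  Adj x y :=
    match x, y with
    | .inl a, .inl b => G1.Adj a b
    | .inr a, .inr b => G2.Adj a b
    | .inl _, .inr _ => True
    | .inr _, .inl _ => True
  symm := by
    refine ⟨?_⟩
    rintro (a | a) (b | b) h
    · exact h.symm
    · trivial
    · trivial
    · exact h.symm
  loopless := by
    refine ⟨?_⟩
    rintro (a | a) h
    · exact G1.irrefl h
    · exact G2.irrefl h

/-- `μ` is an eigenvalue of the real matrix `M`. -/
def matEigen {p : ℕ} (M : Matrix (Fin p) (Fin p) ℝ) (μ : ℝ) : Prop :=
  ∃ v : Fin p → ℝ, v ≠ 0 ∧ M.mulVec v = μ • v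

noncomputable def matMax {p : ℕ} (M : Matrix (Fin p) (Fin p) ℝ) : ℝ :=
  sSup {μ | matEigen M μ}

noncomputable def matMin {p : ℕ} (M : Matrix (Fin p) (Fin p) ℝ) : ℝ :=
  sInf {μ | matEigen M μ}

noncomputable def matSpread {p : ℕ} (M : Matrix (Fin p) (Fin p) ℝ) : ℝ :=
  matMax M - matMin M

/-- The matrix `M = A(H) N + D` associated with an `H`-join of regular graphs. -/
noncomputable def Mjoin {p : ℕ} (H : SimpleGraph (Fin p)) (n d : Fin p → ℕ) :
    Matrix (Fin p) (Fin p) ℝ :=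
  adjMat H * Matrix.diagonal (fun i => (n i : ℝ)) + Matrix.diagonal (fun i => (d i : ℝ))

/-- Average degree of a graph. -/
noncomputable def avgDeg {W : Type*} [Fintype W] (G : SimpleGraph W) : ℝ :=
  2 * G.edgeSet.ncard / Fintype.card W

/-- The graph `G(n,k) = K_k ∨ K̄_{n-k}`. -/
def Gnk (n k : ℕ) : SimpleGraph (Fin k ⊕ Fin (n - k)) :=
  joinG (⊤ : SimpleGraph (Fin k)) (⊥ : SimpleGraph (Fin (n - k)))


lemma key {W : Type*} [Fintype W] (G : SimpleGraph W) (T : Set W) (k τ : ℕ)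
    (hT : IsKTauRegularSet G T k τ) (μ : ℝ) (v : W → ℝ)
    (hv : (adjMat G).mulVec v = μ • v) (hsum : ∑ x, v x = 0)
    (hne : μ ≠ (k : ℝ) - (τ : ℝ)) :
    ∑ x, (if x ∈ T then v x else 0) = 0 := by
  set cT := ∑ x, (if x ∈ T then v x else 0) with hcT
  have hrow : ∀ x, ∑ y, adjMat G x y * (if y ∈ T then (1:ℝ) else 0)
      = if x ∈ T then (k:ℝ) else (τ:ℝ) := by
    intro x
    have h1 : ∀ y, adjMat G x y * (if y ∈ T then (1:ℝ) else 0)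
        = if y ∈ T ∧ G.Adj x y then (1:ℝ) else 0 := by
      intro y
      by_cases h1 : G.Adj x y <;> by_cases h2 : y ∈ T <;> simp [adjMat, h1, h2]
    rw [Finset.sum_congr rfl (fun y _ => h1 y), Finset.sum_boole]
    have hcard : {j | j ∈ T ∧ G.Adj x j}.ncard
        = (Finset.univ.filter (fun j => j ∈ T ∧ G.Adj x j)).card := by
      rw [Set.ncard_eq_toFinset_card']
      simp [Set.toFinset_setOf]
    by_cases hx : x ∈ T
    · rw [if_pos hx]
      have := hT.1 x hx
      rw [hcard] at this
      exact_mod_cast congrArg (Nat.cast : ℕ → ℝ) this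
    · rw [if_neg hx]
      have := hT.2 x hx
      rw [hcard] at this
      exact_mod_cast congrArg (Nat.cast : ℕ → ℝ) this
  have hD1 : ∑ x, v x * (∑ y, adjMat G x y * (if y ∈ T then (1:ℝ) else 0))
      = ((k:ℝ) - τ) * cT := by
    have : ∀ x, v x * (∑ y, adjMat G x y * (if y ∈ T then (1:ℝ) else 0))
        = ((k:ℝ) - τ) * (if x ∈ T then v x else 0) + (τ:ℝ) * v x := by
      intro x
      rw [hrow x]
      by_cases hx : x ∈ T <;> simp [hx] <;> ring
    rw [Finset.sum_congr rfl (fun x _ => this x), Finset.sum_add_distrib,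
      ← Finset.mul_sum, ← Finset.mul_sum, hsum]
    ring
  have hD2 : ∑ x, v x * (∑ y, adjMat G x y * (if y ∈ T then (1:ℝ) else 0))
      = μ * cT := by
    have hsymm : ∀ x y, adjMat G x y = adjMat G y x := by
      intro x y; simp [adjMat, G.adj_comm]
    calc ∑ x, v x * (∑ y, adjMat G x y * (if y ∈ T then (1:ℝ) else 0))
        = ∑ x, ∑ y, v x * (adjMat G x y * (if y ∈ T then (1:ℝ) else 0)) := by
          simp [Finset.mul_sum]
      _ = ∑ y, ∑ x, v x * (adjMat G x y * (if y ∈ T then (1:ℝ) else 0)) :=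
          Finset.sum_comm
      _ = ∑ y, (if y ∈ T then (1:ℝ) else 0) * (∑ x, adjMat G y x * v x) := by
          refine Finset.sum_congr rfl (fun y _ => ?_)
          rw [Finset.mul_sum]
          refine Finset.sum_congr rfl (fun x _ => ?_)
          rw [hsymm x y]; ring
      _ = ∑ y, (if y ∈ T then (1:ℝ) else 0) * (μ * v y) := by
          refine Finset.sum_congr rfl (fun y _ => ?_)
          have := congrFun hv y
          simp only [Matrix.mulVec, dotProduct, Pi.smul_apply, smul_eq_mul] at this
          rw [this]
      _ = μ * cT := by
          rw [hcT, Finset.mul_sum]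
          refine Finset.sum_congr rfl (fun y _ => ?_)
          by_cases hy : y ∈ T <;> simp [hy]
  have hmul : μ * cT = ((k:ℝ) - τ) * cT := by rw [← hD1, ← hD2]
  by_cases hc : cT = 0
  · exact hc
  · exact absurd (mul_right_cancel₀ hc hmul) hne


lemma join_adj_same {p : ℕ} {V : Fin p → Type*} (H : SimpleGraph (Fin p))
    (G : ∀ i, SimpleGraph (V i)) (S : ∀ i, Set (V i)) (i : Fin p) (a b : V i) :
    (genJoin H G S).Adj ⟨i, a⟩ ⟨i, b⟩ ↔ (G i).Adj a b := by
  constructor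
  · rintro (⟨i', a', b', h1, h2, hab⟩ | ⟨hne, _⟩)
    · obtain ⟨rfl, ha⟩ := Sigma.mk.inj_iff.mp h1
      obtain ⟨-, hb⟩ := Sigma.mk.inj_iff.mp h2
      rw [heq_iff_eq] at ha hb
      rwa [ha, hb]
    · exact absurd rfl hne
  · intro h
    exact Or.inl ⟨i, a, b, rfl, rfl, h⟩

lemma join_adj_diff {p : ℕ} {V : Fin p → Type*} (H : SimpleGraph (Fin p))
    (G : ∀ i, SimpleGraph (V i)) (S : ∀ i, Set (V i)) {i j : Fin p} (hij : j ≠ i)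
    (a : V j) (b : V i) :
    (genJoin H G S).Adj ⟨j, a⟩ ⟨i, b⟩ ↔ H.Adj j i ∧ a ∈ S j ∧ b ∈ S i := by
  constructor
  · rintro (⟨i', a', b', h1, h2, hab⟩ | ⟨_, hH, ha, hb⟩)
    · exact absurd ((Sigma.mk.inj_iff.mp h1).1.trans (Sigma.mk.inj_iff.mp h2).1.symm) hij
    · exact ⟨hH, ha, hb⟩
  · rintro ⟨hH, ha, hb⟩
    exact Or.inr ⟨hij, hH, ha, hb⟩


/-- non-main eigenvalues `μ ≠ k_i - τ_i` of the parts survive in the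
`(H,𝒮)`-generalized join, when each `S_i` or its complement is `(k_i,τ_i)`-regular. -/
theorem stmt1 {p : ℕ} {V : Fin p → Type*} [∀ i, Fintype (V i)]
    (H : SimpleGraph (Fin p)) (G : ∀ i, SimpleGraph (V i)) (S : ∀ i, Set (V i))
    (k τ : Fin p → ℕ)
    (hS : ∀ i, IsKTauRegularSet (G i) (S i) (k i) (τ i) ∨
               IsKTauRegularSet (G i) (S i)ᶜ (k i) (τ i))
    (i : Fin p) (μ : ℝ) (hnm : IsNonMain (G i) μ) (he : IsEigen (G i) μ)
    (hne : μ ≠ (k i : ℝ) - (τ i : ℝ)) :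
    IsEigen (genJoin H G S) μ := by
  obtain ⟨v, hv0, hv⟩ := he
  have hsum : ∑ x, v x = 0 := hnm v hv
  have hSsum : ∑ b, (if b ∈ S i then v b else 0) = 0 := by
    rcases hS i with h | h
    · exact key (G i) (S i) (k i) (τ i) h μ v hv hsum hne
    · have hcomp := key (G i) (S i)ᶜ (k i) (τ i) h μ v hv hsum hne
      have hsplit : ∑ b, (if b ∈ S i then v b else 0) + ∑ b, (if b ∈ (S i)ᶜ then v b else 0)
          = ∑ b, v b := by
        rw [← Finset.sum_add_distrib]
        refine Finset.sum_congr rfl (fun b _ => ?_)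
        by_cases hb : b ∈ S i <;> simp [hb]
      have h5 := hsplit.trans hsum
      simp only [Set.mem_compl_iff] at h5 hcomp
      rw [hcomp, add_zero] at h5
      exact h5
  set w : (Σ j, V j) → ℝ := fun x => if h : x.1 = i then v (h ▸ x.2) else 0 with hw
  have hwi : ∀ b : V i, w ⟨i, b⟩ = v b := fun b => by simp [hw]
  refine ⟨w, ?_, ?_⟩
  · intro hcon
    apply hv0
    funext b
    have := congrFun hcon ⟨i, b⟩
    rwa [hwi] at this
  · funext x
    obtain ⟨j, a⟩ := x
    have hsum1 : ((adjMat (genJoin H G S)).mulVec w) ⟨j, a⟩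
        = ∑ b : V i, adjMat (genJoin H G S) ⟨j, a⟩ ⟨i, b⟩ * v b := by
      show ∑ y : Σ j, V j, adjMat (genJoin H G S) ⟨j, a⟩ y * w y = _
      rw [← Finset.univ_sigma_univ, Finset.sum_sigma]
      rw [Finset.sum_eq_single_of_mem i (Finset.mem_univ i)]
      · exact Finset.sum_congr rfl (fun b _ => by rw [hwi])
      · intro j' _ hj'
        refine Finset.sum_eq_zero (fun b _ => ?_)
        have : w ⟨j', b⟩ = 0 := dif_neg hj'
        rw [this, mul_zero]
    by_cases hj : j = i
    · subst hj
      have h2 : ∀ b : V j, adjMat (genJoin H G S) ⟨j, a⟩ ⟨j, b⟩ = adjMat (G j) a b := by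
        intro b
        simp only [adjMat, join_adj_same]
      rw [hsum1, Finset.sum_congr rfl (fun b _ => by rw [h2 b])]
      have := congrFun hv a
      simp only [Matrix.mulVec, dotProduct, Pi.smul_apply, smul_eq_mul] at this ⊢
      rw [this, hwi]
    · have h2 : ∀ b : V i, adjMat (genJoin H G S) ⟨j, a⟩ ⟨i, b⟩ * v b
          = if H.Adj j i ∧ a ∈ S j then (if b ∈ S i then v b else 0) else 0 := by
        intro b
        simp only [adjMat, join_adj_diff H G S hj]
        by_cases h3 : H.Adj j i ∧ a ∈ S j
        · by_cases h4 : b ∈ S i <;> simp [h3.1, h3.2, h4]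
        · rw [if_neg h3, if_neg (fun hc => h3 ⟨hc.1, hc.2.1⟩), zero_mul]
      rw [hsum1, Finset.sum_congr rfl (fun b _ => h2 b)]
      have hw0 : w ⟨j, a⟩ = 0 := dif_neg hj
      rw [Pi.smul_apply, hw0, smul_eq_mul, mul_zero]
      by_cases h3 : H.Adj j i ∧ a ∈ S j
      · simp only [if_pos h3]
        exact hSsum
      · simp [h3]
end

section
/- If G is a graph of order n with average degree d̄(G) ≤ n/2, then s(G) ≤ n. -/
open scoped Classical

section helpers
variable {W : Type*} [Fintype W] (G : SimpleGraph W)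

lemma adjMat_isHermitian : (adjMat G).IsHermitian := by
  ext i j
  simp [adjMat, Matrix.conjTranspose_apply, SimpleGraph.adj_comm]

lemma isEigen_iff (μ : ℝ) : IsEigen G μ ↔ μ ∈ spectrum ℝ (adjMat G) := by
  rw [← AlgEquiv.spectrum_eq (Matrix.toLinAlgEquiv' (R := ℝ) (n := W)),
    ← Module.End.hasEigenvalue_iff_mem_spectrum]
  constructor
  · rintro ⟨v, hv, hmul⟩
    apply Module.End.hasEigenvalue_of_hasEigenvector (x := v)
    refine ⟨Module.End.mem_eigenspace_iff.mpr ?_, hv⟩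
    simpa [Matrix.toLinAlgEquiv'_apply] using hmul
  · intro hμ
    obtain ⟨v, hv1, hv0⟩ := hμ.exists_hasEigenvector
    exact ⟨v, hv0, by simpa [Matrix.toLinAlgEquiv'_apply] using Module.End.mem_eigenspace_iff.mp hv1⟩

lemma eigenSet_eq : {μ | IsEigen G μ} = Set.range (adjMat_isHermitian G).eigenvalues := by
  have hA := adjMat_isHermitian G
  have key : spectrum ℝ (adjMat G)
      = spectrum ℝ (Matrix.diagonal (RCLike.ofReal ∘ hA.eigenvalues) : Matrix W W ℝ) := by
    conv_lhs => rw [hA.spectral_theorem]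
    rw [Unitary.conjStarAlgAut_apply]
    exact Unitary.spectrum_star_right_conjugate
  ext μ
  rw [Set.mem_setOf_eq, isEigen_iff, key, spectrum_diagonal]
  constructor
  · rintro ⟨i, rfl⟩; exact ⟨i, rfl⟩
  · rintro ⟨i, rfl⟩; exact ⟨i, rfl⟩

lemma sum_sq_eigen :
    ∑ i : W, (adjMat_isHermitian G).eigenvalues i ^ 2 = 2 * (G.edgeSet.ncard : ℝ) := by
  have hA := adjMat_isHermitian G
  have h1 : Matrix.trace (adjMat G * adjMat G) = ∑ i, hA.eigenvalues i ^ 2 := by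
    conv_lhs => rw [hA.spectral_theorem]
    rw [Unitary.conjStarAlgAut_apply]
    set U := (hA.eigenvectorUnitary : Matrix W W ℝ)
    set D := (Matrix.diagonal (RCLike.ofReal ∘ hA.eigenvalues) : Matrix W W ℝ)
    have hU : star U * U = 1 := Unitary.coe_star_mul_self hA.eigenvectorUnitary
    have e : U * D * star U * (U * D * star U) = U * (D * D) * star U := by
      simp only [mul_assoc]
      rw [← mul_assoc (star U) U, hU, one_mul]
    rw [e, Matrix.trace_mul_comm (U * (D * D)) (star U), ← mul_assoc, hU, one_mul]
    simp [D, Matrix.diagonal_mul_diagonal, Matrix.trace, Matrix.diag, sq]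
  have h2 : Matrix.trace (adjMat G * adjMat G) = 2 * (G.edgeSet.ncard : ℝ) := by
    have hdeg : ∀ i, ∑ j, adjMat G i j = (G.degree i : ℝ) := by
      intro i
      simp only [adjMat, SimpleGraph.degree, ← SimpleGraph.neighborFinset_def]
      rw [Finset.sum_boole]
      congr 1
      norm_cast
      congr 1
      ext j
      simp [SimpleGraph.neighborFinset_def]
    have hent : ∀ i j, adjMat G i j * adjMat G j i = adjMat G i j := by
      intro i j
      by_cases hij : G.Adj i j
      · simp [adjMat, hij, hij.symm]
      · simp [adjMat, hij, (fun h : G.Adj j i => hij h.symm)]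
    have : Matrix.trace (adjMat G * adjMat G) = ∑ i, ∑ j, adjMat G i j := by
      simp only [Matrix.trace, Matrix.diag, Matrix.mul_apply, hent]
    rw [this]
    simp only [hdeg]
    rw [← Nat.cast_sum]
    rw [SimpleGraph.sum_degrees_eq_twice_card_edges]
    rw [Set.ncard_eq_toFinset_card' G.edgeSet]
    push_cast
    rfl
  rw [← h1, h2]

end helpers


/-- if the average degree is at most `n/2` then `s(G) ≤ n`. -/
theorem stmt6 {W : Type*} [Fintype W] (G : SimpleGraph W)
    (h : avgDeg G ≤ (Fintype.card W : ℝ) / 2) :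
    spread G ≤ (Fintype.card W : ℝ) := by
  rcases isEmpty_or_nonempty W with hW | hW
  · have hE : {μ | IsEigen G μ} = ∅ := by
      ext μ
      simp only [Set.mem_setOf_eq, Set.mem_empty_iff_false, iff_false]
      rintro ⟨v, hv, -⟩
      exact hv (funext fun i => (IsEmpty.false i).elim)
    simp [spread, lamMax, lamMin, hE, Real.sSup_empty, Real.sInf_empty]
  · have hEeq : {μ | IsEigen G μ} = Set.range (adjMat_isHermitian G).eigenvalues := eigenSet_eq G
    have hfin : {μ | IsEigen G μ}.Finite := hEeq ▸ Set.finite_range _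
    have hne : {μ | IsEigen G μ}.Nonempty := hEeq ▸ Set.range_nonempty _
    have hmaxmem : lamMax G ∈ {μ | IsEigen G μ} := hne.csSup_mem hfin
    have hminmem : lamMin G ∈ {μ | IsEigen G μ} := hne.csInf_mem hfin
    have hle : lamMin G ≤ lamMax G := csInf_le_csSup hne hfin.bddBelow hfin.bddAbove
    rw [hEeq] at hmaxmem hminmem
    obtain ⟨i0, hi0⟩ := hmaxmem
    obtain ⟨j0, hj0⟩ := hminmem
    have hn : (0:ℝ) < Fintype.card W := by exact_mod_cast Fintype.card_pos
    have hcn : (0:ℝ) ≤ Fintype.card W := le_of_lt hn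
    by_cases hij : i0 = j0
    · have : lamMax G = lamMin G := by rw [← hi0, ← hj0, hij]
      unfold spread
      rw [this]
      linarith
    · have h2 : (lamMax G)^2 + (lamMin G)^2 ≤ ∑ i, (adjMat_isHermitian G).eigenvalues i ^ 2 := by
        have hsub : ∑ i ∈ ({i0, j0} : Finset W), (adjMat_isHermitian G).eigenvalues i ^ 2
            ≤ ∑ i, (adjMat_isHermitian G).eigenvalues i ^ 2 :=
          Finset.sum_le_sum_of_subset_of_nonneg (Finset.subset_univ _)
            (fun i _ _ => sq_nonneg _)
        rwa [Finset.sum_pair hij, hi0, hj0] at hsub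
      have hsum := sum_sq_eigen G
      have hm : 2 * (2 * (G.edgeSet.ncard:ℝ)) ≤ (Fintype.card W:ℝ) * (Fintype.card W:ℝ) := by
        unfold avgDeg at h
        rw [div_le_div_iff₀ hn (by norm_num : (0:ℝ) < 2)] at h
        linarith
      have hfinal : (spread G)^2 ≤ (Fintype.card W:ℝ)^2 := by
        unfold spread
        nlinarith [h2, hsum, hm, sq_nonneg (lamMax G + lamMin G)]
      have hs0 : 0 ≤ spread G := by unfold spread; linarith
      nlinarith [hfinal, hs0, hcn]
end
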